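/- Let c ∈ (0,1], s = 0.8c, δ = 1/2, w(x) = (1−s)(1−δ)/(1−δx) + s, and v₀(x) = s/(c(w(x)−s)) = s(1−δx)/(c(1−s)(1−δ)). Then v₀(x)(w(x)−s) = s/c for all x ∈ [0,1], and the optimal expected revenue under v₀ with capacity constraint vol(S) ≤ c equals s; moreover every Borel set S with vol(S) = c attains this optimum. -/

import Mathlib

open MeasureTheory Set

theorem stmt11 (c s δ : ℝ) (hc : c ∈ Ioc (0:ℝ) 1)
    (hs : s = 0.8 * c) (hδ : δ = 1 / 2)
    (w v0 : ℝ → ℝ)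
    (hw : ∀ x, w x = (1 - s) * (1 - δ) / (1 - δ * x) + s)
    (hv0 : ∀ x, v0 x = s / (c * (w x - s))) :
    (∀ x ∈ Icc (0:ℝ) 1, v0 x * (w x - s) = s / c) ∧
    IsGreatest {r : ℝ | ∃ S : Set ℝ, MeasurableSet S ∧ S ⊆ Icc 0 1 ∧
        (volume S).toReal ≤ c ∧
        (∫ x in S, v0 x * w x) / (1 + ∫ x in S, v0 x) = r} s ∧
    ∀ S : Set ℝ, MeasurableSet S → S ⊆ Icc 0 1 → (volume S).toReal = c →
      (∫ x in S, v0 x * w x) / (1 + ∫ x in S, v0 x) = s := by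
  obtain ⟨hc0, hc1⟩ := hc
  have hs0 : 0 < s := by rw [hs]; linarith
  have hs1 : s < 1 := by rw [hs]; linarith
  subst hδ
  set g : ℝ → ℝ := fun x => (s / (c * (1 - s) * (1 - 1/2))) * (1 - (1/2) * x) with hg
  have hgcont : Continuous g := by fun_prop
  have hwpos : ∀ x ∈ Icc (0:ℝ) 1, 0 < w x - s := by
    intro x hx
    have hd : 0 < 1 - (1/2 : ℝ) * x := by linarith [hx.2]
    have hws : w x - s = (1 - s) * (1 - 1/2) / (1 - (1/2) * x) := by rw [hw x]; ring
    rw [hws]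
    apply div_pos (by nlinarith) hd
  have hpt : ∀ x ∈ Icc (0:ℝ) 1, v0 x * (w x - s) = s / c := by
    intro x hx
    have hne : w x - s ≠ 0 := (hwpos x hx).ne'
    rw [hv0 x]
    field_simp
  have heq : ∀ x ∈ Icc (0:ℝ) 1, v0 x = g x := by
    intro x hx
    have hd : (1 : ℝ) - (1/2) * x ≠ 0 := by have := hx.2; intro h; linarith
    have hws : w x - s = (1 - s) * (1 - 1/2) / (1 - (1/2) * x) := by rw [hw x]; ring
    rw [hv0 x, hws, hg]
    have h1s : (1 : ℝ) - s ≠ 0 := by linarith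
    field_simp
  have hgnn : ∀ x ∈ Icc (0:ℝ) 1, 0 ≤ g x := by
    intro x hx
    have hd : 0 ≤ 1 - (1/2 : ℝ) * x := by linarith [hx.2]
    have h1s : 0 < (1 : ℝ) - s := by linarith
    have : 0 < s / (c * (1 - s) * (1 - 1/2)) := by positivity
    exact mul_nonneg this.le hd
  -- main computation for arbitrary S
  have key : ∀ S : Set ℝ, MeasurableSet S → S ⊆ Icc 0 1 →
      (∫ x in S, v0 x * w x) = (volume S).toReal * (s / c) + s * ∫ x in S, v0 x
      ∧ 0 ≤ ∫ x in S, v0 x := by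
    intro S hSm hSsub
    have hIg : IntegrableOn g S := (hgcont.integrableOn_Icc).mono_set hSsub
    have hIc : IntegrableOn (fun _ : ℝ => s / c) S := by
      have hfin : volume S < ⊤ :=
        lt_of_le_of_lt (measure_mono hSsub) (by simp [Real.volume_Icc])
      exact integrableOn_const hfin.ne
    have hv0g : ∫ x in S, v0 x = ∫ x in S, g x :=
      setIntegral_congr_fun hSm (fun x hx => heq x (hSsub hx))
    have hnum : ∫ x in S, v0 x * w x = ∫ x in S, (s / c + s * g x) := by
      apply setIntegral_congr_fun hSm
      intro x hx
      have hx1 := hSsub hx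
      have h1 := hpt x hx1
      have h2 := heq x hx1
      show v0 x * w x = s / c + s * g x
      have h3 : v0 x * w x = v0 x * (w x - s) + s * v0 x := by ring
      rw [h3, h1, h2]
    have hsum : ∫ x in S, (s / c + s * g x)
        = (volume S).toReal * (s / c) + s * ∫ x in S, g x := by
      rw [integral_add hIc (hIg.const_mul s), setIntegral_const, MeasureTheory.integral_const_mul]
      simp [smul_eq_mul, Measure.real]
    refine ⟨by rw [hnum, hsum, hv0g], ?_⟩
    rw [hv0g]
    exact setIntegral_nonneg hSm (fun x hx => hgnn x (hSsub hx))
  -- equality case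
  have keyEq : ∀ S : Set ℝ, MeasurableSet S → S ⊆ Icc 0 1 → (volume S).toReal = c →
      (∫ x in S, v0 x * w x) / (1 + ∫ x in S, v0 x) = s := by
    intro S hSm hSsub hvol
    obtain ⟨hN, hI⟩ := key S hSm hSsub
    set I := ∫ x in S, v0 x
    have hcc : c * (s / c) = s := by field_simp
    have : ∫ x in S, v0 x * w x = s * (1 + I) := by
      rw [hN, hvol, hcc]; ring
    rw [this, mul_div_assoc, div_self (by linarith : (1:ℝ) + I ≠ 0), mul_one]
  refine ⟨hpt, ⟨⟨Icc 0 c, measurableSet_Icc, Icc_subset_Icc le_rfl hc1, ?_, ?_⟩, ?_⟩, keyEq⟩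
  · simp [Real.volume_Icc, ENNReal.toReal_ofReal hc0.le]
  · exact keyEq _ measurableSet_Icc (Icc_subset_Icc le_rfl hc1)
      (by simp [Real.volume_Icc, ENNReal.toReal_ofReal hc0.le])
  · rintro r ⟨S, hSm, hSsub, hvol, rfl⟩
    obtain ⟨hN, hI⟩ := key S hSm hSsub
    set I := ∫ x in S, v0 x
    have hV0 : 0 ≤ (volume S).toReal := ENNReal.toReal_nonneg
    have hVs : (volume S).toReal * (s / c) ≤ s := by
      have h1 : (volume S).toReal * (s / c) ≤ c * (s / c) :=
        mul_le_mul_of_nonneg_right hvol (by positivity)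
      have : c * (s / c) = s := by field_simp
      linarith
    rw [hN, div_le_iff₀ (by linarith : (0:ℝ) < 1 + I)]
    nlinarith
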